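/- Let G be a spanning tree on N = 2n vertices with C₃ pairs of edges sharing a common node. Under the uniform random permutation labeling, the within-treated edge count R₁ and within-control edge count R₂ satisfy Cov(R₁, R₂) = ((N−2)/(16(N−3)))·( 3(N−2) − 2C₃·N/(N−1) ). -/

import Mathlib

set_option linter.unusedSectionVars false
set_option maxHeartbeats 1000000
open Finset
namespace Stmt16Aux
variable {α : Type*} [DecidableEq α] [Fintype α]

noncomputable def dd (i j : α) : ℝ := if i = j then 1 else 0
noncomputable def nu (i j : α) : ℝ := 1 - dd i j

lemma dd_self (i : α) : dd i i = 1 := by simp [dd]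
lemma dd_of_ne {i j : α} (h : i ≠ j) : dd i j = 0 := by simp [dd, h]
lemma dd_comm (i j : α) : dd i j = dd j i := by simp [dd, eq_comm]
lemma nu_self (i : α) : nu i i = 0 := by simp [nu, dd]
lemma nu_of_ne {i j : α} (h : i ≠ j) : nu i j = 1 := by simp [nu, dd, h]
lemma nu_perm (σ : Equiv.Perm α) (i j : α) : nu (σ i) (σ j) = nu i j := by
  simp [nu, dd, EmbeddingLike.apply_eq_iff_eq]

lemma exists_perm_pair {a b a' b' : α} (hab : a ≠ b) (hab' : a' ≠ b') :
    ∃ τ : Equiv.Perm α, τ a = a' ∧ τ b = b' := by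
  classical
  set t1 := Equiv.swap a a' with ht1
  set t2 := Equiv.swap (t1 b) b' with ht2
  refine ⟨t2 * t1, ?_, ?_⟩
  · have h1 : t1 a = a' := Equiv.swap_apply_left _ _
    have hne1 : a' ≠ t1 b := by
      rw [← h1]; exact fun h => hab (t1.injective h)
    simp only [Equiv.Perm.mul_apply, h1]
    exact Equiv.swap_apply_of_ne_of_ne hne1 hab'
  · simp only [Equiv.Perm.mul_apply]
    exact Equiv.swap_apply_left _ _

lemma pair_sum (f : α → α → ℝ) {a b : α} (hab : a ≠ b) :
    (∑ i : α, ∑ j : α, nu i j) * (∑ σ : Equiv.Perm α, f (σ a) (σ b))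
    = (Fintype.card (Equiv.Perm α) : ℝ) * (∑ i : α, ∑ j : α, nu i j * f i j) := by
  have hconst : ∀ i j : α, i ≠ j →
      (∑ σ : Equiv.Perm α, f (σ i) (σ j)) = ∑ σ : Equiv.Perm α, f (σ a) (σ b) := by
    intro i j hij
    obtain ⟨τ, hτa, hτb⟩ := exists_perm_pair hab hij
    calc (∑ σ : Equiv.Perm α, f (σ i) (σ j))
        = ∑ σ : Equiv.Perm α, f ((σ * τ) a) ((σ * τ) b) := by
          simp only [Equiv.Perm.mul_apply, hτa, hτb]
      _ = ∑ σ : Equiv.Perm α, f (σ a) (σ b) :=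
          Equiv.sum_comp (Equiv.mulRight τ) (fun ρ => f (ρ a) (ρ b))
  calc (∑ i : α, ∑ j : α, nu i j) * (∑ σ : Equiv.Perm α, f (σ a) (σ b))
      = ∑ i : α, ∑ j : α, nu i j * (∑ σ : Equiv.Perm α, f (σ i) (σ j)) := by
        rw [sum_mul]
        refine Finset.sum_congr rfl fun i _ => ?_
        rw [sum_mul]
        refine Finset.sum_congr rfl fun j _ => ?_
        rcases eq_or_ne i j with rfl | hij
        · simp [nu_self]
        · rw [hconst i j hij]
    _ = ∑ σ : Equiv.Perm α, ∑ i : α, ∑ j : α, nu i j * f (σ i) (σ j) := by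
        have h1 : ∀ i : α, (∑ j : α, ∑ σ : Equiv.Perm α, nu i j * f (σ i) (σ j))
            = ∑ σ : Equiv.Perm α, ∑ j : α, nu i j * f (σ i) (σ j) := fun i => Finset.sum_comm
        simp_rw [Finset.mul_sum, h1]
        exact Finset.sum_comm
    _ = ∑ σ : Equiv.Perm α, ∑ i : α, ∑ j : α, nu i j * f i j := by
        refine Finset.sum_congr rfl fun σ _ => ?_
        calc (∑ i : α, ∑ j : α, nu i j * f (σ i) (σ j))
            = ∑ i, ∑ j, nu (σ i) (σ j) * f (σ i) (σ j) := by
              simp_rw [nu_perm]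
          _ = ∑ i : α, ∑ j : α, nu i j * f i j := by
              rw [Equiv.sum_comp σ (fun x => ∑ j, nu x (σ j) * f x (σ j))]
              refine Finset.sum_congr rfl fun x _ => ?_
              exact Equiv.sum_comp σ (fun y => nu x y * f x y)
    _ = (Fintype.card (Equiv.Perm α) : ℝ) * (∑ i : α, ∑ j : α, nu i j * f i j) := by
        rw [Finset.sum_const, nsmul_eq_mul, Fintype.card]

end Stmt16Aux

namespace Stmt16Aux
variable {α : Type*} [DecidableEq α] [Fintype α]

lemma exists_perm_quad {a b c d a' b' c' d' : α}
    (hab : a ≠ b) (hac : a ≠ c) (had : a ≠ d) (hbc : b ≠ c) (hbd : b ≠ d) (hcd : c ≠ d)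
    (hab' : a' ≠ b') (hac' : a' ≠ c') (had' : a' ≠ d') (hbc' : b' ≠ c') (hbd' : b' ≠ d')
    (hcd' : c' ≠ d') :
    ∃ τ : Equiv.Perm α, τ a = a' ∧ τ b = b' ∧ τ c = c' ∧ τ d = d' := by
  classical
  set t1 := Equiv.swap a a' with ht1
  set t2 := Equiv.swap (t1 b) b' with ht2
  set t3 := Equiv.swap (t2 (t1 c)) c' with ht3
  set t4 := Equiv.swap (t3 (t2 (t1 d))) d' with ht4
  have ha1 : t1 a = a' := Equiv.swap_apply_left _ _
  have ha2 : t2 (t1 a) = a' := by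
    rw [ha1]
    exact Equiv.swap_apply_of_ne_of_ne
      (by rw [← ha1]; exact fun h => hab (t1.injective h)) hab'
  have hb2 : t2 (t1 b) = b' := Equiv.swap_apply_left _ _
  have ha3 : t3 (t2 (t1 a)) = a' := by
    rw [ha2]
    exact Equiv.swap_apply_of_ne_of_ne
      (by rw [← ha2]; exact fun h => hac (t1.injective (t2.injective h))) hac'
  have hb3 : t3 (t2 (t1 b)) = b' := by
    rw [hb2]
    exact Equiv.swap_apply_of_ne_of_ne
      (by rw [← hb2]; exact fun h => hbc (t1.injective (t2.injective h))) hbc'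
  have hc3 : t3 (t2 (t1 c)) = c' := Equiv.swap_apply_left _ _
  have ha4 : t4 (t3 (t2 (t1 a))) = a' := by
    rw [ha3]
    exact Equiv.swap_apply_of_ne_of_ne
      (by rw [← ha3]; exact fun h => had (t1.injective (t2.injective (t3.injective h)))) had'
  have hb4 : t4 (t3 (t2 (t1 b))) = b' := by
    rw [hb3]
    exact Equiv.swap_apply_of_ne_of_ne
      (by rw [← hb3]; exact fun h => hbd (t1.injective (t2.injective (t3.injective h)))) hbd'
  have hc4 : t4 (t3 (t2 (t1 c))) = c' := by
    rw [hc3]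
    exact Equiv.swap_apply_of_ne_of_ne
      (by rw [← hc3]; exact fun h => hcd (t1.injective (t2.injective (t3.injective h)))) hcd'
  have hd4 : t4 (t3 (t2 (t1 d))) = d' := Equiv.swap_apply_left _ _
  exact ⟨t4 * t3 * t2 * t1, by simpa [Equiv.Perm.mul_apply] using ha4,
    by simpa [Equiv.Perm.mul_apply] using hb4,
    by simpa [Equiv.Perm.mul_apply] using hc4,
    by simpa [Equiv.Perm.mul_apply] using hd4⟩


noncomputable def d4 (i j k l : α) : ℝ :=
  nu i j * nu i k * nu i l * nu j k * nu j l * nu k l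

lemma d4_perm (σ : Equiv.Perm α) (i j k l : α) :
    d4 (σ i) (σ j) (σ k) (σ l) = d4 i j k l := by
  simp [d4, nu_perm]

lemma quad_sum (f : α → α → α → α → ℝ) {a b c d : α}
    (hab : a ≠ b) (hac : a ≠ c) (had : a ≠ d) (hbc : b ≠ c) (hbd : b ≠ d) (hcd : c ≠ d) :
    (∑ i : α, ∑ j : α, ∑ k : α, ∑ l : α, d4 i j k l) *
      (∑ σ : Equiv.Perm α, f (σ a) (σ b) (σ c) (σ d))
    = (Fintype.card (Equiv.Perm α) : ℝ) *
      (∑ i : α, ∑ j : α, ∑ k : α, ∑ l : α, d4 i j k l * f i j k l) := by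
  have hconst : ∀ i j k l : α, i ≠ j → i ≠ k → i ≠ l → j ≠ k → j ≠ l → k ≠ l →
      (∑ σ : Equiv.Perm α, f (σ i) (σ j) (σ k) (σ l))
        = ∑ σ : Equiv.Perm α, f (σ a) (σ b) (σ c) (σ d) := by
    intro i j k l hij hik hil hjk hjl hkl
    obtain ⟨τ, h1, h2, h3, h4⟩ :=
      exists_perm_quad hab hac had hbc hbd hcd hij hik hil hjk hjl hkl
    calc (∑ σ : Equiv.Perm α, f (σ i) (σ j) (σ k) (σ l))
        = ∑ σ : Equiv.Perm α, f ((σ * τ) a) ((σ * τ) b) ((σ * τ) c) ((σ * τ) d) := by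
          simp only [Equiv.Perm.mul_apply, h1, h2, h3, h4]
      _ = ∑ σ : Equiv.Perm α, f (σ a) (σ b) (σ c) (σ d) :=
          Equiv.sum_comp (Equiv.mulRight τ) (fun ρ => f (ρ a) (ρ b) (ρ c) (ρ d))
  calc (∑ i : α, ∑ j : α, ∑ k : α, ∑ l : α, d4 i j k l) *
        (∑ σ : Equiv.Perm α, f (σ a) (σ b) (σ c) (σ d))
      = ∑ i : α, ∑ j : α, ∑ k : α, ∑ l : α,
          d4 i j k l * (∑ σ : Equiv.Perm α, f (σ i) (σ j) (σ k) (σ l)) := by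
        rw [sum_mul]
        refine Finset.sum_congr rfl fun i _ => ?_
        rw [sum_mul]
        refine Finset.sum_congr rfl fun j _ => ?_
        rw [sum_mul]
        refine Finset.sum_congr rfl fun k _ => ?_
        rw [sum_mul]
        refine Finset.sum_congr rfl fun l _ => ?_
        rcases eq_or_ne i j with rfl | hij
        · simp [d4, nu_self]
        rcases eq_or_ne i k with rfl | hik
        · simp [d4, nu_self]
        rcases eq_or_ne i l with rfl | hil
        · simp [d4, nu_self]
        rcases eq_or_ne j k with rfl | hjk
        · simp [d4, nu_self]
        rcases eq_or_ne j l with rfl | hjl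
        · simp [d4, nu_self]
        rcases eq_or_ne k l with rfl | hkl
        · simp [d4, nu_self]
        rw [hconst i j k l hij hik hil hjk hjl hkl]
    _ = ∑ σ : Equiv.Perm α, ∑ i : α, ∑ j : α, ∑ k : α, ∑ l : α,
          d4 i j k l * f (σ i) (σ j) (σ k) (σ l) := by
        have h3 : ∀ (i j k : α), (∑ l : α, ∑ σ : Equiv.Perm α,
            d4 i j k l * f (σ i) (σ j) (σ k) (σ l)) = ∑ σ : Equiv.Perm α, ∑ l : α,
            d4 i j k l * f (σ i) (σ j) (σ k) (σ l) := fun _ _ _ => Finset.sum_comm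
        have h2 : ∀ (i j : α), (∑ k : α, ∑ σ : Equiv.Perm α, ∑ l : α,
            d4 i j k l * f (σ i) (σ j) (σ k) (σ l)) = ∑ σ : Equiv.Perm α, ∑ k : α, ∑ l : α,
            d4 i j k l * f (σ i) (σ j) (σ k) (σ l) := fun _ _ => Finset.sum_comm
        have h1 : ∀ (i : α), (∑ j : α, ∑ σ : Equiv.Perm α, ∑ k : α, ∑ l : α,
            d4 i j k l * f (σ i) (σ j) (σ k) (σ l)) = ∑ σ : Equiv.Perm α, ∑ j : α, ∑ k : α,
            ∑ l : α, d4 i j k l * f (σ i) (σ j) (σ k) (σ l) := fun _ => Finset.sum_comm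
        simp_rw [Finset.mul_sum, h3, h2, h1]
        exact Finset.sum_comm
    _ = ∑ σ : Equiv.Perm α, ∑ i : α, ∑ j : α, ∑ k : α, ∑ l : α, d4 i j k l * f i j k l := by
        refine Finset.sum_congr rfl fun σ _ => ?_
        calc (∑ i : α, ∑ j : α, ∑ k : α, ∑ l : α, d4 i j k l * f (σ i) (σ j) (σ k) (σ l))
            = ∑ i : α, ∑ j : α, ∑ k : α, ∑ l : α,
                d4 (σ i) (σ j) (σ k) (σ l) * f (σ i) (σ j) (σ k) (σ l) := by
              simp_rw [d4_perm]
          _ = ∑ i : α, ∑ j : α, ∑ k : α, ∑ l : α, d4 i j k l * f i j k l := by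
              rw [Equiv.sum_comp σ (fun x => ∑ j : α, ∑ k : α, ∑ l : α,
                d4 x (σ j) (σ k) (σ l) * f x (σ j) (σ k) (σ l))]
              refine Finset.sum_congr rfl fun x _ => ?_
              rw [Equiv.sum_comp σ (fun y => ∑ k : α, ∑ l : α,
                d4 x y (σ k) (σ l) * f x y (σ k) (σ l))]
              refine Finset.sum_congr rfl fun y _ => ?_
              rw [Equiv.sum_comp σ (fun z => ∑ l : α, d4 x y z (σ l) * f x y z (σ l))]
              refine Finset.sum_congr rfl fun z _ => ?_
              exact Equiv.sum_comp σ (fun w => d4 x y z w * f x y z w)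
    _ = (Fintype.card (Equiv.Perm α) : ℝ) *
        (∑ i : α, ∑ j : α, ∑ k : α, ∑ l : α, d4 i j k l * f i j k l) := by
        rw [Finset.sum_const, nsmul_eq_mul, Fintype.card]

lemma sum_dd_mul (i : α) (g : α → ℝ) : ∑ j, dd i j * g j = g i := by
  simp [dd, ite_mul]

lemma sum_dd (i : α) : ∑ j, dd i j = 1 := by simp [dd]

lemma sum_nu (i : α) : ∑ j : α, nu i j = (Fintype.card α : ℝ) - 1 := by
  simp [nu, Finset.sum_sub_distrib, sum_dd]

lemma K2_eq : (∑ i : α, ∑ j : α, nu i j)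
    = (Fintype.card α : ℝ) * ((Fintype.card α : ℝ) - 1) := by
  simp [sum_nu, Finset.sum_const, mul_comm]
  ring

lemma mul_sum4 (F G : α → α → ℝ) :
    (∑ i : α, ∑ j : α, F i j) * (∑ k : α, ∑ l : α, G k l)
    = ∑ i : α, ∑ j : α, ∑ k : α, ∑ l : α, F i j * G k l := by
  rw [Finset.sum_mul_sum]
  simp_rw [Finset.sum_mul_sum]
  exact Finset.sum_congr rfl fun i _ => Finset.sum_comm

lemma sum_nu_w (w : α → ℝ) (hw : ∀ a, w a * w a = w a) :
    (∑ i : α, ∑ j : α, nu i j * (w i * w j)) = (∑ a, w a) ^ 2 - ∑ a, w a := by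
  have e1 : ∀ i j : α, nu i j * (w i * w j) = w i * w j - dd i j * (w i * w j) := by
    intro i j; simp only [nu]; ring
  simp_rw [e1, Finset.sum_sub_distrib, sum_dd_mul, ← Finset.mul_sum, ← Finset.sum_mul, hw]
  ring

lemma K4_eq : (∑ i : α, ∑ j : α, ∑ k : α, ∑ l : α, d4 i j k l)
    = (Fintype.card α : ℝ) * ((Fintype.card α : ℝ) - 1) *
      ((Fintype.card α : ℝ) - 2) * ((Fintype.card α : ℝ) - 3) := by
  set N : ℝ := (Fintype.card α : ℝ) with hN
  have hC1 : ∀ i j k : α, (∑ l : α, nu i l * nu j l * nu k l)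
      = N - 3 + dd i j + dd i k + dd j k - dd i j * dd i k := by
    intro i j k
    have e1 : ∀ l : α, nu i l * nu j l * nu k l
        = 1 - dd i l - dd j l - dd k l + (dd i l * (dd j l) + dd i l * (dd k l)
          + dd j l * (dd k l)) - dd i l * (dd j l * dd k l) := by
      intro l; simp only [nu]; ring
    have c2 : ∀ (p q : α), (∑ l : α, dd p l * dd q l) = dd p q := by
      intro p q
      have : ∀ l : α, dd p l * dd q l = dd p l * (fun x => dd q x) l := fun l => rfl
      rw [Finset.sum_congr rfl fun l _ => this l, sum_dd_mul p (fun x => dd q x)]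
      exact (dd_comm q p).symm ▸ (dd_comm q p)
    have c3 : (∑ l : α, dd i l * (dd j l * dd k l)) = dd i j * dd i k := by
      rw [sum_dd_mul i (fun x => dd j x * dd k x)]
      rw [dd_comm j i, dd_comm k i]
    simp_rw [e1]
    simp only [Finset.sum_sub_distrib, Finset.sum_add_distrib, c2, c3, sum_dd,
      Finset.sum_const, Finset.card_univ, nsmul_eq_mul, mul_one]
    ring
  have hsum_nunu : ∀ i j : α, (∑ k : α, nu i k * nu j k) = N - 2 + dd i j := by
    intro i j
    have e1 : ∀ k : α, nu i k * nu j k = 1 - dd i k - dd j k + dd i k * dd j k := by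
      intro k; simp only [nu]; ring
    have c2 : (∑ k : α, dd i k * dd j k) = dd i j := by
      rw [sum_dd_mul i (fun x => dd j x), dd_comm j i]
    simp_rw [e1]
    simp only [Finset.sum_sub_distrib, Finset.sum_add_distrib, c2, sum_dd,
      Finset.sum_const, Finset.card_univ, nsmul_eq_mul, mul_one]
    ring
  have step1 : ∀ i j : α, (∑ k : α, ∑ l : α, nu i k * nu j k * (nu i l * nu j l * nu k l))
      = (N - 3 + dd i j) * (N - 2 + dd i j) := by
    intro i j
    have : ∀ k : α, (∑ l : α, nu i k * nu j k * (nu i l * nu j l * nu k l))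
        = nu i k * nu j k * (N - 3 + dd i j + dd i k + dd j k - dd i j * dd i k) := by
      intro k; rw [← Finset.mul_sum, hC1 i j k]
    simp_rw [this]
    have e2 : ∀ k : α, nu i k * nu j k *
        (N - 3 + dd i j + dd i k + dd j k - dd i j * dd i k)
        = (N - 3 + dd i j) * (nu i k * nu j k) := by
      intro k
      rcases eq_or_ne k i with rfl | h1
      · simp [nu_self]
      rcases eq_or_ne k j with rfl | h2
      · simp [nu_self]
      rw [dd_of_ne (Ne.symm h1), dd_of_ne (Ne.symm h2)]
      ring
    simp_rw [e2, ← Finset.mul_sum, hsum_nunu i j]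
  calc (∑ i : α, ∑ j : α, ∑ k : α, ∑ l : α, d4 i j k l)
      = ∑ i : α, ∑ j : α, nu i j *
          ((N - 3 + dd i j) * (N - 2 + dd i j)) := by
        refine Finset.sum_congr rfl fun i _ => Finset.sum_congr rfl fun j _ => ?_
        rw [← step1 i j, Finset.mul_sum]
        refine Finset.sum_congr rfl fun k _ => ?_
        rw [Finset.mul_sum]
        refine Finset.sum_congr rfl fun l _ => ?_
        simp only [d4]; ring
    _ = ∑ i : α, ∑ j : α, ((N - 3) * (N - 2)) * nu i j := by
        refine Finset.sum_congr rfl fun i _ => Finset.sum_congr rfl fun j _ => ?_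
        rcases eq_or_ne i j with rfl | h
        · simp [nu_self]
        · rw [dd_of_ne h, nu_of_ne h]; ring
    _ = N * (N - 1) * (N - 2) * (N - 3) := by
        simp_rw [← Finset.mul_sum]
        rw [K2_eq]
        ring



lemma sum_comm2P {β : Type*} [Fintype β] (T : β → α → α → ℝ) :
    (∑ x : β, ∑ i : α, ∑ j : α, T x i j) = ∑ i : α, ∑ j : α, ∑ x : β, T x i j := by
  rw [Finset.sum_comm]
  refine Finset.sum_congr rfl fun i _ => ?_
  exact Finset.sum_comm

lemma sum_comm4P {β : Type*} [Fintype β] (T : β → α → α → α → α → ℝ) :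
    (∑ x : β, ∑ i : α, ∑ j : α, ∑ k : α, ∑ l : α, T x i j k l)
    = ∑ i : α, ∑ j : α, ∑ k : α, ∑ l : α, ∑ x : β, T x i j k l := by
  rw [sum_comm2P (fun x i j => ∑ k : α, ∑ l : α, T x i j k l)]
  refine Finset.sum_congr rfl fun i _ => Finset.sum_congr rfl fun j _ => ?_
  exact sum_comm2P (fun x k l => T x i j k l)

end Stmt16Aux
section Concrete
open Stmt16Aux

variable (n : ℕ)

noncomputable def uu (a : Fin (2*n)) : ℝ := if (a:ℕ) < n then 1 else 0
noncomputable def vv (a : Fin (2*n)) : ℝ := if n ≤ (a:ℕ) then 1 else 0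

lemma uu_sq (a : Fin (2*n)) : uu n a * uu n a = uu n a := by
  by_cases h : (a:ℕ) < n <;> simp [uu, h]

lemma vv_sq (a : Fin (2*n)) : vv n a * vv n a = vv n a := by
  by_cases h : n ≤ (a:ℕ) <;> simp [vv, h]

lemma uu_vv (a : Fin (2*n)) : uu n a * vv n a = 0 := by
  simp only [uu, vv]
  split_ifs with h1 h2
  · exact absurd h2 (by omega)
  all_goals ring

lemma sum_uu : ∑ a, uu n a = (n : ℝ) := by
  have h : (∑ a, uu n a) = ∑ i ∈ Finset.range (2*n), (if i < n then (1:ℝ) else 0) := by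
    rw [← Fin.sum_univ_eq_sum_range (fun i => if i < n then (1:ℝ) else 0) (2*n)]
    rfl
  rw [h, Finset.sum_boole]
  have : (Finset.range (2*n)).filter (fun i => i < n) = Finset.range n := by
    ext x; simp [Finset.mem_filter, Finset.mem_range]; omega
  rw [this, Finset.card_range]

lemma sum_vv : ∑ a, vv n a = (n : ℝ) := by
  have h : ∀ a : Fin (2*n), vv n a = 1 - uu n a := by
    intro a; simp only [uu, vv]; split_ifs with h1 h2 <;> first | omega | ring
  simp_rw [h]
  rw [Finset.sum_sub_distrib, sum_uu, Finset.sum_const, Finset.card_univ,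
    Fintype.card_fin, nsmul_eq_mul, mul_one]
  push_cast; ring

end Concrete
section Graph
open Stmt16Aux Finset

variable {n : ℕ} (G : SimpleGraph (Fin (2*n))) [DecidableRel G.Adj]

noncomputable def ee (i j : Fin (2*n)) : ℝ := if G.Adj i j then 1 else 0

lemma ee_symm (i j : Fin (2*n)) : ee G i j = ee G j i := by
  simp [ee, G.adj_comm]

lemma ee_self (i : Fin (2*n)) : ee G i i = 0 := by simp [ee]

lemma ee_sq (i j : Fin (2*n)) : ee G i j * ee G i j = ee G i j := by
  by_cases h : G.Adj i j <;> simp [ee, h]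

lemma dd_ee (i j : Fin (2*n)) : dd i j * ee G i j = 0 := by
  rcases eq_or_ne i j with rfl | h
  · simp [ee_self]
  · simp [dd_of_ne h]

lemma row (i : Fin (2*n)) : ∑ j, ee G i j = (G.degree i : ℝ) := by
  rw [SimpleGraph.degree, SimpleGraph.neighborFinset_eq_filter]
  rw [show (∑ j, ee G i j) = ∑ j, if G.Adj i j then (1:ℝ) else 0 from rfl,
    Finset.sum_boole]

lemma col (j : Fin (2*n)) : ∑ i, ee G i j = (G.degree j : ℝ) := by
  have : ∀ i, ee G i j = ee G j i := fun i => ee_symm G i j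
  simp_rw [this]; exact row G j

lemma sum_ee : (∑ i, ∑ j, ee G i j) = ∑ i, (G.degree i : ℝ) := by
  exact Finset.sum_congr rfl fun i _ => row G i

lemma A_eq : (∑ i, ∑ j, ∑ k, ∑ l, d4 i j k l * (ee G i j * ee G k l))
    = (∑ i, (G.degree i : ℝ))^2 - 4 * (∑ i, (G.degree i : ℝ)^2)
      + 2 * (∑ i, (G.degree i : ℝ)) := by
  set Ds : ℝ := ∑ i, (G.degree i : ℝ) with hDs
  have hB1 : ∀ i j k : Fin (2*n), (∑ l, nu i l * nu j l * ee G k l)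
      = (G.degree k : ℝ) - ee G k i - ee G k j + dd i j * ee G k i := by
    intro i j k
    have e1 : ∀ l, nu i l * nu j l * ee G k l
        = ee G k l - dd i l * (ee G k l) - dd j l * (ee G k l)
          + dd i l * (dd j l * ee G k l) := by
      intro l; simp only [nu]; ring
    simp_rw [e1]
    simp only [Finset.sum_add_distrib, Finset.sum_sub_distrib, sum_dd_mul, row]
    rw [dd_comm j i]
  have hB2 : ∀ i j : Fin (2*n),
      (∑ k, nu i k * nu j k *
        ((G.degree k : ℝ) - ee G k i - ee G k j + dd i j * ee G k i))
      = Ds - 2*(G.degree i : ℝ) - 2*(G.degree j : ℝ) + 2 * ee G i j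
        + 2 * (dd i j * (G.degree i : ℝ)) := by
    intro i j
    have e1 : ∀ k, nu i k * nu j k *
        ((G.degree k : ℝ) - ee G k i - ee G k j + dd i j * ee G k i)
        = ((G.degree k : ℝ) - ee G k i - ee G k j + dd i j * ee G k i)
          - dd i k * ((G.degree k : ℝ) - ee G k i - ee G k j + dd i j * ee G k i)
          - dd j k * ((G.degree k : ℝ) - ee G k i - ee G k j + dd i j * ee G k i)
          + dd i k * (dd j k * ((G.degree k : ℝ) - ee G k i - ee G k j + dd i j * ee G k i)) := by
      intro k; simp only [nu]; ring
    simp_rw [e1]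
    simp only [Finset.sum_add_distrib, Finset.sum_sub_distrib, sum_dd_mul,
      ← Finset.mul_sum, col]
    have h1 : dd i i = 1 := dd_self i
    have h2 : ee G i i = 0 := ee_self G i
    have h3 : ee G j j = 0 := ee_self G j
    have h4 : dd i j * ee G j i = 0 := by
      rw [dd_comm i j]; exact dd_ee G j i
    have h5 : dd j i * ee G i j = 0 := by
      rw [dd_comm j i]; exact dd_ee G i j
    have h6 : ee G j i = ee G i j := (ee_symm G i j).symm
    have h7 : dd i j * ee G i i = dd i j * 0 := by rw [h2]
    have h8 : dd j i = dd i j := dd_comm j i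
    rw [h2, h3, h6, h8]
    ring_nf
    rw [show dd i j * ee G i j = 0 from dd_ee G i j]
    ring
  have hstep : (∑ i, ∑ j, ∑ k, ∑ l, d4 i j k l * (ee G i j * ee G k l))
      = ∑ i, ∑ j, ee G i j * (Ds - 2*(G.degree i : ℝ) - 2*(G.degree j : ℝ)
          + 2 * ee G i j + 2 * (dd i j * (G.degree i : ℝ))) := by
    refine Finset.sum_congr rfl fun i _ => Finset.sum_congr rfl fun j _ => ?_
    have hk : ∀ k, (∑ l, d4 i j k l * (ee G i j * ee G k l))
        = ee G i j * (nu i k * nu j k *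
          ((G.degree k : ℝ) - ee G k i - ee G k j + dd i j * ee G k i)) := by
      intro k
      calc (∑ l, d4 i j k l * (ee G i j * ee G k l))
          = ∑ l, ee G i j * (nu i k * nu j k * (nu i l * nu j l * ee G k l)) := by
            refine Finset.sum_congr rfl fun l _ => ?_
            rcases eq_or_ne i j with rfl | h1
            · simp [d4, nu_self, ee_self]
            rcases eq_or_ne k l with rfl | h2
            · simp [d4, nu_self, ee_self]
            simp only [d4, nu_of_ne h1, nu_of_ne h2]; ring
        _ = ee G i j * (nu i k * nu j k * (∑ l, nu i l * nu j l * ee G k l)) := by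
            rw [← Finset.mul_sum, ← Finset.mul_sum]
        _ = ee G i j * (nu i k * nu j k *
            ((G.degree k : ℝ) - ee G k i - ee G k j + dd i j * ee G k i)) := by
            rw [hB1 i j k]
    simp_rw [hk]
    rw [← Finset.mul_sum, hB2 i j]
  rw [hstep]
  have e2 : ∀ i j : Fin (2*n), ee G i j * (Ds - 2*(G.degree i : ℝ) - 2*(G.degree j : ℝ)
        + 2 * ee G i j + 2 * (dd i j * (G.degree i : ℝ)))
      = Ds * ee G i j - 2*((G.degree i : ℝ) * ee G i j) - 2*((G.degree j : ℝ) * ee G i j)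
        + 2 * ee G i j := by
    intro i j
    have h1 : dd i j * ee G i j = 0 := dd_ee G i j
    have h2 : ee G i j * ee G i j = ee G i j := ee_sq G i j
    linear_combination (2*(G.degree i : ℝ)) * h1 + 2 * h2
  simp_rw [e2]
  have hA1 : ∀ i : Fin (2*n), (∑ j, Ds * ee G i j) = Ds * (G.degree i : ℝ) := by
    intro i; rw [← Finset.mul_sum, row]
  have hA2 : ∀ i : Fin (2*n), (∑ j, (G.degree i : ℝ) * ee G i j) = (G.degree i : ℝ)^2 := by
    intro i; rw [← Finset.mul_sum, row]; ring
  have hA3 : (∑ i, ∑ j, (G.degree j : ℝ) * ee G i j) = ∑ j, (G.degree j : ℝ)^2 := by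
    rw [Finset.sum_comm]
    refine Finset.sum_congr rfl fun j _ => ?_
    rw [← Finset.mul_sum, col]; ring
  simp only [Finset.sum_add_distrib, Finset.sum_sub_distrib, ← Finset.mul_sum]
  rw [sum_ee, hA3]
  have hA2' : (∑ i, (G.degree i : ℝ) * ∑ j, ee G i j) = ∑ i, (G.degree i : ℝ)^2 := by
    refine Finset.sum_congr rfl fun i _ => ?_
    rw [row]; ring
  rw [hA2']
  ring

end Graph
section More
open Stmt16Aux Finset

variable (n : ℕ) (G : SimpleGraph (Fin (2*n))) [DecidableRel G.Adj]

lemma S4_eq : (∑ i, ∑ j, ∑ k, ∑ l, d4 i j k l * (uu n i * uu n j * (vv n k * vv n l)))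
    = (∑ i, ∑ j, nu i j * (uu n i * uu n j)) * (∑ k, ∑ l, nu k l * (vv n k * vv n l)) := by
  rw [mul_sum4]
  refine Finset.sum_congr rfl fun i _ => Finset.sum_congr rfl fun j _ =>
    Finset.sum_congr rfl fun k _ => Finset.sum_congr rfl fun l _ => ?_
  rcases eq_or_ne i j with rfl | h1
  · simp [d4, nu_self]
  rcases eq_or_ne k l with rfl | h2
  · simp [d4, nu_self]
  rcases eq_or_ne i k with rfl | h3
  · have h := uu_vv n i
    simp only [d4, nu_self]
    first
    | linear_combination (-(nu i j * uu n j * (nu i l * vv n l))) * h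
    | linear_combination (nu i j * uu n j * (nu i l * vv n l)) * h
  rcases eq_or_ne i l with rfl | h4
  · have h := uu_vv n i
    simp only [d4, nu_self]
    first
    | linear_combination (-(nu i j * uu n j * (nu k i * vv n k))) * h
    | linear_combination (nu i j * uu n j * (nu k i * vv n k)) * h
  rcases eq_or_ne j k with rfl | h5
  · have h := uu_vv n j
    simp only [d4, nu_self]
    first
    | linear_combination (-(nu i j * uu n i * (nu j l * vv n l))) * h
    | linear_combination (nu i j * uu n i * (nu j l * vv n l)) * h
  rcases eq_or_ne j l with rfl | h6
  · have h := uu_vv n j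
    simp only [d4, nu_self]
    first
    | linear_combination (-(nu i j * uu n i * (nu k j * vv n k))) * h
    | linear_combination (nu i j * uu n i * (nu k j * vv n k)) * h
  simp only [d4, nu_of_ne h3, nu_of_ne h4, nu_of_ne h5, nu_of_ne h6]
  ring

lemma ind_uu (i j a b : Fin (2*n)) :
    (if G.Adj i j ∧ (a : ℕ) < n ∧ (b : ℕ) < n then (1:ℝ) else 0)
    = ee G i j * (uu n a * uu n b) := by
  by_cases h1 : G.Adj i j <;> by_cases h2 : (a:ℕ) < n <;> by_cases h3 : (b:ℕ) < n <;>
    simp [ee, uu, h1, h2, h3]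

lemma ind_vv (i j a b : Fin (2*n)) :
    (if G.Adj i j ∧ n ≤ (a : ℕ) ∧ n ≤ (b : ℕ) then (1:ℝ) else 0)
    = ee G i j * (vv n a * vv n b) := by
  by_cases h1 : G.Adj i j <;> by_cases h2 : n ≤ (a:ℕ) <;> by_cases h3 : n ≤ (b:ℕ) <;>
    simp [ee, vv, h1, h2, h3]

lemma Ds_eq (hG : G.IsTree) : (∑ i, (G.degree i : ℝ)) = 2 * ((2*n : ℝ) - 1) := by
  have h1 : (∑ v, G.degree v) = 2 * G.edgeFinset.card :=
    G.sum_degrees_eq_twice_card_edges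
  have h2 : G.edgeFinset.card + 1 = Fintype.card (Fin (2*n)) := hG.card_edgeFinset
  have h3 : ((G.edgeFinset.card : ℝ)) = (2*n : ℝ) - 1 := by
    have := congrArg (fun x : ℕ => (x : ℝ)) h2
    simp only [Fintype.card_fin] at this
    push_cast at this
    linarith
  have h4 : (∑ i, (G.degree i : ℝ)) = ((∑ v, G.degree v : ℕ) : ℝ) := by push_cast; rfl
  rw [h4, h1]; push_cast; linarith

lemma D2_eq (C3 : ℝ) (hC3 : C3 = ∑ v, ((G.degree v).choose 2 : ℝ)) :
    (∑ i, (G.degree i : ℝ)^2) = 2 * C3 + ∑ i, (G.degree i : ℝ) := by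
  rw [hC3]
  simp_rw [Nat.cast_choose_two]
  rw [Finset.mul_sum, ← Finset.sum_add_distrib]
  refine Finset.sum_congr rfl fun i _ => ?_
  ring

end More
open Stmt16Aux Finset in
theorem stmt16 (n : ℕ) (hn : 3 ≤ n) (G : SimpleGraph (Fin (2 * n)))
    [DecidableRel G.Adj] (hG : G.IsTree)
    (R1 R2 : Equiv.Perm (Fin (2 * n)) → ℝ)
    (hR1 : ∀ σ, R1 σ = (∑ i, ∑ j,
      if G.Adj i j ∧ (σ i : ℕ) < n ∧ (σ j : ℕ) < n then (1 : ℝ) else 0) / 2)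
    (hR2 : ∀ σ, R2 σ = (∑ i, ∑ j,
      if G.Adj i j ∧ n ≤ (σ i : ℕ) ∧ n ≤ (σ j : ℕ) then (1 : ℝ) else 0) / 2)
    (N C3 : ℝ) (hN : N = (2 * n : ℕ))
    (hC3 : C3 = ∑ v, ((G.degree v).choose 2 : ℝ)) :
    (∑ σ : Equiv.Perm (Fin (2 * n)), R1 σ * R2 σ) /
        (Fintype.card (Equiv.Perm (Fin (2 * n))) : ℝ) -
      ((∑ σ : Equiv.Perm (Fin (2 * n)), R1 σ) /
          (Fintype.card (Equiv.Perm (Fin (2 * n))) : ℝ)) *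
        ((∑ σ : Equiv.Perm (Fin (2 * n)), R2 σ) /
          (Fintype.card (Equiv.Perm (Fin (2 * n))) : ℝ)) =
    ((N - 2) / (16 * (N - 3))) * (3 * (N - 2) - 2 * C3 * (N / (N - 1))) := by
  classical
  have h3 : (3 : ℝ) ≤ (n : ℝ) := by exact_mod_cast hn
  have hMpos : (0 : ℝ) < (Fintype.card (Equiv.Perm (Fin (2 * n))) : ℝ) := by
    exact_mod_cast Fintype.card_pos
  have hcard : ((Fintype.card (Fin (2 * n)) : ℕ) : ℝ) = 2 * (n : ℝ) := by
    simp
  have hN' : N = 2 * (n : ℝ) := by rw [hN]; push_cast; ring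
  have hR1' : ∀ σ : Equiv.Perm (Fin (2 * n)),
      R1 σ = (∑ i, ∑ j, ee G i j * (uu n (σ i) * uu n (σ j))) / 2 := by
    intro σ; rw [hR1 σ]; congr 1
    exact Finset.sum_congr rfl fun i _ => Finset.sum_congr rfl fun j _ =>
      ind_uu n G i j (σ i) (σ j)
  have hR2' : ∀ σ : Equiv.Perm (Fin (2 * n)),
      R2 σ = (∑ i, ∑ j, ee G i j * (vv n (σ i) * vv n (σ j))) / 2 := by
    intro σ; rw [hR2 σ]; congr 1
    exact Finset.sum_congr rfl fun i _ => Finset.sum_congr rfl fun j _ =>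
      ind_vv n G i j (σ i) (σ j)
  have hSu : (∑ i : Fin (2*n), ∑ j : Fin (2*n), nu i j * (uu n i * uu n j))
      = (n:ℝ)^2 - (n:ℝ) := by
    rw [sum_nu_w (uu n) (uu_sq n), sum_uu]
  have hSv : (∑ i : Fin (2*n), ∑ j : Fin (2*n), nu i j * (vv n i * vv n j))
      = (n:ℝ)^2 - (n:ℝ) := by
    rw [sum_nu_w (vv n) (vv_sq n), sum_vv]
  have key_u : ∀ i j : Fin (2*n), i ≠ j →
      (2*(n:ℝ)*(2*(n:ℝ)-1)) * (∑ σ : Equiv.Perm (Fin (2*n)), uu n (σ i) * uu n (σ j))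
      = (Fintype.card (Equiv.Perm (Fin (2 * n))) : ℝ) * ((n:ℝ)^2 - (n:ℝ)) := by
    intro i j hij
    have h := pair_sum (fun a b => uu n a * uu n b) hij
    simp only [K2_eq, hcard] at h
    rw [hSu] at h
    exact h
  have key_v : ∀ i j : Fin (2*n), i ≠ j →
      (2*(n:ℝ)*(2*(n:ℝ)-1)) * (∑ σ : Equiv.Perm (Fin (2*n)), vv n (σ i) * vv n (σ j))
      = (Fintype.card (Equiv.Perm (Fin (2 * n))) : ℝ) * ((n:ℝ)^2 - (n:ℝ)) := by
    intro i j hij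
    have h := pair_sum (fun a b => vv n a * vv n b) hij
    simp only [K2_eq, hcard] at h
    rw [hSv] at h
    exact h
  -- sums of R1, R2
  have hswap1 : (∑ σ : Equiv.Perm (Fin (2*n)), R1 σ)
      = (∑ i, ∑ j, ee G i j *
          (∑ σ : Equiv.Perm (Fin (2*n)), uu n (σ i) * uu n (σ j))) / 2 := by
    simp_rw [hR1']
    rw [← Finset.sum_div]
    congr 1
    calc (∑ σ : Equiv.Perm (Fin (2*n)), ∑ i, ∑ j, ee G i j * (uu n (σ i) * uu n (σ j)))
        = ∑ i, ∑ j, ∑ σ : Equiv.Perm (Fin (2*n)), ee G i j * (uu n (σ i) * uu n (σ j)) :=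
          sum_comm2P _
      _ = ∑ i, ∑ j, ee G i j * (∑ σ : Equiv.Perm (Fin (2*n)), uu n (σ i) * uu n (σ j)) :=
          Finset.sum_congr rfl fun i _ => Finset.sum_congr rfl fun j _ =>
            (Finset.mul_sum _ _ _).symm
  have hswap2 : (∑ σ : Equiv.Perm (Fin (2*n)), R2 σ)
      = (∑ i, ∑ j, ee G i j *
          (∑ σ : Equiv.Perm (Fin (2*n)), vv n (σ i) * vv n (σ j))) / 2 := by
    simp_rw [hR2']
    rw [← Finset.sum_div]
    congr 1
    calc (∑ σ : Equiv.Perm (Fin (2*n)), ∑ i, ∑ j, ee G i j * (vv n (σ i) * vv n (σ j)))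
        = ∑ i, ∑ j, ∑ σ : Equiv.Perm (Fin (2*n)), ee G i j * (vv n (σ i) * vv n (σ j)) :=
          sum_comm2P _
      _ = ∑ i, ∑ j, ee G i j * (∑ σ : Equiv.Perm (Fin (2*n)), vv n (σ i) * vv n (σ j)) :=
          Finset.sum_congr rfl fun i _ => Finset.sum_congr rfl fun j _ =>
            (Finset.mul_sum _ _ _).symm
  have hSR1 : (2*(n:ℝ)*(2*(n:ℝ)-1)) * (∑ σ : Equiv.Perm (Fin (2*n)), R1 σ)
      = (2*((2*(n:ℝ)) - 1)) * ((Fintype.card (Equiv.Perm (Fin (2*n))) : ℝ)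
        * ((n:ℝ)^2 - (n:ℝ))) / 2 := by
    rw [hswap1, ← mul_div_assoc]
    rw [show (2*(n:ℝ)*(2*(n:ℝ)-1)) * (∑ i, ∑ j, ee G i j *
          (∑ σ : Equiv.Perm (Fin (2*n)), uu n (σ i) * uu n (σ j)))
        = (2*((2*(n:ℝ)) - 1)) * ((Fintype.card (Equiv.Perm (Fin (2*n))) : ℝ)
          * ((n:ℝ)^2 - (n:ℝ))) from ?_]
    calc (2*(n:ℝ)*(2*(n:ℝ)-1)) * (∑ i, ∑ j, ee G i j *
          (∑ σ : Equiv.Perm (Fin (2*n)), uu n (σ i) * uu n (σ j)))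
        = ∑ i, ∑ j, ee G i j * ((2*(n:ℝ)*(2*(n:ℝ)-1)) *
            (∑ σ : Equiv.Perm (Fin (2*n)), uu n (σ i) * uu n (σ j))) := by
          rw [Finset.mul_sum]
          refine Finset.sum_congr rfl fun i _ => ?_
          rw [Finset.mul_sum]
          exact Finset.sum_congr rfl fun j _ => by ring
      _ = ∑ i, ∑ j, ee G i j * ((Fintype.card (Equiv.Perm (Fin (2*n))) : ℝ)
            * ((n:ℝ)^2 - (n:ℝ))) := by
          refine Finset.sum_congr rfl fun i _ => Finset.sum_congr rfl fun j _ => ?_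
          rcases eq_or_ne i j with rfl | hij
          · simp [ee_self]
          · rw [key_u i j hij]
      _ = (∑ i, ∑ j, ee G i j) * ((Fintype.card (Equiv.Perm (Fin (2*n))) : ℝ)
            * ((n:ℝ)^2 - (n:ℝ))) := by
          simp_rw [← Finset.sum_mul]
      _ = (2*((2*(n:ℝ)) - 1)) * ((Fintype.card (Equiv.Perm (Fin (2*n))) : ℝ)
            * ((n:ℝ)^2 - (n:ℝ))) := by
          rw [sum_ee, Ds_eq n G hG]
  have hSR2 : (2*(n:ℝ)*(2*(n:ℝ)-1)) * (∑ σ : Equiv.Perm (Fin (2*n)), R2 σ)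
      = (2*((2*(n:ℝ)) - 1)) * ((Fintype.card (Equiv.Perm (Fin (2*n))) : ℝ)
        * ((n:ℝ)^2 - (n:ℝ))) / 2 := by
    rw [hswap2, ← mul_div_assoc]
    rw [show (2*(n:ℝ)*(2*(n:ℝ)-1)) * (∑ i, ∑ j, ee G i j *
          (∑ σ : Equiv.Perm (Fin (2*n)), vv n (σ i) * vv n (σ j)))
        = (2*((2*(n:ℝ)) - 1)) * ((Fintype.card (Equiv.Perm (Fin (2*n))) : ℝ)
          * ((n:ℝ)^2 - (n:ℝ))) from ?_]
    calc (2*(n:ℝ)*(2*(n:ℝ)-1)) * (∑ i, ∑ j, ee G i j *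
          (∑ σ : Equiv.Perm (Fin (2*n)), vv n (σ i) * vv n (σ j)))
        = ∑ i, ∑ j, ee G i j * ((2*(n:ℝ)*(2*(n:ℝ)-1)) *
            (∑ σ : Equiv.Perm (Fin (2*n)), vv n (σ i) * vv n (σ j))) := by
          rw [Finset.mul_sum]
          refine Finset.sum_congr rfl fun i _ => ?_
          rw [Finset.mul_sum]
          exact Finset.sum_congr rfl fun j _ => by ring
      _ = ∑ i, ∑ j, ee G i j * ((Fintype.card (Equiv.Perm (Fin (2*n))) : ℝ)
            * ((n:ℝ)^2 - (n:ℝ))) := by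
          refine Finset.sum_congr rfl fun i _ => Finset.sum_congr rfl fun j _ => ?_
          rcases eq_or_ne i j with rfl | hij
          · simp [ee_self]
          · rw [key_v i j hij]
      _ = (∑ i, ∑ j, ee G i j) * ((Fintype.card (Equiv.Perm (Fin (2*n))) : ℝ)
            * ((n:ℝ)^2 - (n:ℝ))) := by
          simp_rw [← Finset.sum_mul]
      _ = (2*((2*(n:ℝ)) - 1)) * ((Fintype.card (Equiv.Perm (Fin (2*n))) : ℝ)
            * ((n:ℝ)^2 - (n:ℝ))) := by
          rw [sum_ee, Ds_eq n G hG]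
  -- product sum
  have hS4' : (∑ i : Fin (2*n), ∑ j : Fin (2*n), ∑ k : Fin (2*n), ∑ l : Fin (2*n),
      d4 i j k l * (uu n i * uu n j * (vv n k * vv n l)))
      = ((n:ℝ)^2 - (n:ℝ)) * ((n:ℝ)^2 - (n:ℝ)) := by
    rw [S4_eq n, hSu, hSv]
  have key4 : ∀ i j k l : Fin (2*n),
      (ee G i j * ee G k l) * ((2*(n:ℝ)*(2*(n:ℝ)-1)*(2*(n:ℝ)-2)*(2*(n:ℝ)-3)) *
        (∑ σ : Equiv.Perm (Fin (2*n)), uu n (σ i) * uu n (σ j) * (vv n (σ k) * vv n (σ l))))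
      = d4 i j k l * (ee G i j * ee G k l) *
        ((Fintype.card (Equiv.Perm (Fin (2*n))) : ℝ) *
          (((n:ℝ)^2 - (n:ℝ)) * ((n:ℝ)^2 - (n:ℝ)))) := by
    intro i j k l
    rcases eq_or_ne i j with rfl | hij
    · simp [ee_self]
    rcases eq_or_ne k l with rfl | hkl
    · simp [ee_self]
    rcases eq_or_ne i k with rfl | hik
    · have hz : ∀ σ : Equiv.Perm (Fin (2*n)),
          uu n (σ i) * uu n (σ j) * (vv n (σ i) * vv n (σ l)) = 0 := by
        intro σ
        have h := uu_vv n (σ i)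
        first
        | linear_combination (uu n (σ j) * vv n (σ l)) * h
        | linear_combination (-(uu n (σ j) * vv n (σ l))) * h
      simp only [hz, Finset.sum_const_zero, mul_zero]
      rw [show d4 i j i l = 0 by simp [d4, nu_self]]
      ring
    rcases eq_or_ne i l with rfl | hil
    · have hz : ∀ σ : Equiv.Perm (Fin (2*n)),
          uu n (σ i) * uu n (σ j) * (vv n (σ k) * vv n (σ i)) = 0 := by
        intro σ
        have h := uu_vv n (σ i)
        first
        | linear_combination (uu n (σ j) * vv n (σ k)) * h
        | linear_combination (-(uu n (σ j) * vv n (σ k))) * h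
      simp only [hz, Finset.sum_const_zero, mul_zero]
      rw [show d4 i j k i = 0 by simp [d4, nu_self]]
      ring
    rcases eq_or_ne j k with rfl | hjk
    · have hz : ∀ σ : Equiv.Perm (Fin (2*n)),
          uu n (σ i) * uu n (σ j) * (vv n (σ j) * vv n (σ l)) = 0 := by
        intro σ
        have h := uu_vv n (σ j)
        first
        | linear_combination (uu n (σ i) * vv n (σ l)) * h
        | linear_combination (-(uu n (σ i) * vv n (σ l))) * h
      simp only [hz, Finset.sum_const_zero, mul_zero]
      rw [show d4 i j j l = 0 by simp [d4, nu_self]]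
      ring
    rcases eq_or_ne j l with rfl | hjl
    · have hz : ∀ σ : Equiv.Perm (Fin (2*n)),
          uu n (σ i) * uu n (σ j) * (vv n (σ k) * vv n (σ j)) = 0 := by
        intro σ
        have h := uu_vv n (σ j)
        first
        | linear_combination (uu n (σ i) * vv n (σ k)) * h
        | linear_combination (-(uu n (σ i) * vv n (σ k))) * h
      simp only [hz, Finset.sum_const_zero, mul_zero]
      rw [show d4 i j k j = 0 by simp [d4, nu_self]]
      ring
    have h := quad_sum (fun a b c d => uu n a * uu n b * (vv n c * vv n d))
      hij hik hil hjk hjl hkl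
    simp only [K4_eq, hcard] at h
    rw [hS4'] at h
    rw [show d4 i j k l = 1 by
      simp [d4, nu_of_ne hij, nu_of_ne hik, nu_of_ne hil, nu_of_ne hjk,
        nu_of_ne hjl, nu_of_ne hkl]]
    linear_combination (ee G i j * ee G k l) * h
  have hprod : ∀ σ : Equiv.Perm (Fin (2*n)), R1 σ * R2 σ
      = (∑ i, ∑ j, ∑ k, ∑ l, (ee G i j * ee G k l) *
          (uu n (σ i) * uu n (σ j) * (vv n (σ k) * vv n (σ l)))) / 4 := by
    intro σ
    rw [hR1' σ, hR2' σ, div_mul_div_comm,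
      mul_sum4 (fun i j => ee G i j * (uu n (σ i) * uu n (σ j)))
        (fun k l => ee G k l * (vv n (σ k) * vv n (σ l)))]
    rw [show ((2:ℝ)*2) = 4 by norm_num]
    congr 1
    refine Finset.sum_congr rfl fun i _ => Finset.sum_congr rfl fun j _ =>
      Finset.sum_congr rfl fun k _ => Finset.sum_congr rfl fun l _ => by ring
  have hswap4 : (∑ σ : Equiv.Perm (Fin (2*n)), R1 σ * R2 σ)
      = (∑ i, ∑ j, ∑ k, ∑ l, (ee G i j * ee G k l) *
          (∑ σ : Equiv.Perm (Fin (2*n)),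
            uu n (σ i) * uu n (σ j) * (vv n (σ k) * vv n (σ l)))) / 4 := by
    simp_rw [hprod]
    rw [← Finset.sum_div]
    congr 1
    calc (∑ σ : Equiv.Perm (Fin (2*n)), ∑ i, ∑ j, ∑ k, ∑ l, (ee G i j * ee G k l) *
          (uu n (σ i) * uu n (σ j) * (vv n (σ k) * vv n (σ l))))
        = ∑ i, ∑ j, ∑ k, ∑ l, ∑ σ : Equiv.Perm (Fin (2*n)), (ee G i j * ee G k l) *
            (uu n (σ i) * uu n (σ j) * (vv n (σ k) * vv n (σ l))) := sum_comm4P _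
      _ = ∑ i, ∑ j, ∑ k, ∑ l, (ee G i j * ee G k l) *
            (∑ σ : Equiv.Perm (Fin (2*n)),
              uu n (σ i) * uu n (σ j) * (vv n (σ k) * vv n (σ l))) :=
          Finset.sum_congr rfl fun i _ => Finset.sum_congr rfl fun j _ =>
            Finset.sum_congr rfl fun k _ => Finset.sum_congr rfl fun l _ =>
              (Finset.mul_sum _ _ _).symm
  have hSP : (2*(n:ℝ)*(2*(n:ℝ)-1)*(2*(n:ℝ)-2)*(2*(n:ℝ)-3)) *
      (∑ σ : Equiv.Perm (Fin (2*n)), R1 σ * R2 σ)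
      = ((2*((2*(n:ℝ)) - 1))^2 - 4*(2*C3 + 2*((2*(n:ℝ)) - 1)) + 2*(2*((2*(n:ℝ)) - 1))) *
        ((Fintype.card (Equiv.Perm (Fin (2*n))) : ℝ) *
          (((n:ℝ)^2 - (n:ℝ)) * ((n:ℝ)^2 - (n:ℝ)))) / 4 := by
    rw [hswap4, ← mul_div_assoc]
    rw [show (2*(n:ℝ)*(2*(n:ℝ)-1)*(2*(n:ℝ)-2)*(2*(n:ℝ)-3)) *
          (∑ i, ∑ j, ∑ k, ∑ l, (ee G i j * ee G k l) *
            (∑ σ : Equiv.Perm (Fin (2*n)),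
              uu n (σ i) * uu n (σ j) * (vv n (σ k) * vv n (σ l))))
        = ((2*((2*(n:ℝ)) - 1))^2 - 4*(2*C3 + 2*((2*(n:ℝ)) - 1)) + 2*(2*((2*(n:ℝ)) - 1))) *
          ((Fintype.card (Equiv.Perm (Fin (2*n))) : ℝ) *
            (((n:ℝ)^2 - (n:ℝ)) * ((n:ℝ)^2 - (n:ℝ)))) from ?_]
    calc (2*(n:ℝ)*(2*(n:ℝ)-1)*(2*(n:ℝ)-2)*(2*(n:ℝ)-3)) *
          (∑ i, ∑ j, ∑ k, ∑ l, (ee G i j * ee G k l) *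
            (∑ σ : Equiv.Perm (Fin (2*n)),
              uu n (σ i) * uu n (σ j) * (vv n (σ k) * vv n (σ l))))
        = ∑ i, ∑ j, ∑ k, ∑ l, (ee G i j * ee G k l) *
            ((2*(n:ℝ)*(2*(n:ℝ)-1)*(2*(n:ℝ)-2)*(2*(n:ℝ)-3)) *
              (∑ σ : Equiv.Perm (Fin (2*n)),
                uu n (σ i) * uu n (σ j) * (vv n (σ k) * vv n (σ l)))) := by
          rw [Finset.mul_sum]
          refine Finset.sum_congr rfl fun i _ => ?_
          rw [Finset.mul_sum]
          refine Finset.sum_congr rfl fun j _ => ?_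
          rw [Finset.mul_sum]
          refine Finset.sum_congr rfl fun k _ => ?_
          rw [Finset.mul_sum]
          exact Finset.sum_congr rfl fun l _ => by ring
      _ = ∑ i, ∑ j, ∑ k, ∑ l, d4 i j k l * (ee G i j * ee G k l) *
            ((Fintype.card (Equiv.Perm (Fin (2*n))) : ℝ) *
              (((n:ℝ)^2 - (n:ℝ)) * ((n:ℝ)^2 - (n:ℝ)))) := by
          exact Finset.sum_congr rfl fun i _ => Finset.sum_congr rfl fun j _ =>
            Finset.sum_congr rfl fun k _ => Finset.sum_congr rfl fun l _ =>
              key4 i j k l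
      _ = (∑ i, ∑ j, ∑ k, ∑ l, d4 i j k l * (ee G i j * ee G k l)) *
            ((Fintype.card (Equiv.Perm (Fin (2*n))) : ℝ) *
              (((n:ℝ)^2 - (n:ℝ)) * ((n:ℝ)^2 - (n:ℝ)))) := by
          simp_rw [← Finset.sum_mul]
      _ = ((2*((2*(n:ℝ)) - 1))^2 - 4*(2*C3 + 2*((2*(n:ℝ)) - 1)) + 2*(2*((2*(n:ℝ)) - 1))) *
            ((Fintype.card (Equiv.Perm (Fin (2*n))) : ℝ) *
              (((n:ℝ)^2 - (n:ℝ)) * ((n:ℝ)^2 - (n:ℝ)))) := by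
          rw [A_eq, D2_eq n G C3 hC3, Ds_eq n G hG]
  -- final algebra
  have hMne : (Fintype.card (Equiv.Perm (Fin (2*n))) : ℝ) ≠ 0 := ne_of_gt hMpos
  have hne1 : (2*(n:ℝ)-1) ≠ 0 := by nlinarith
  have hne2 : (2*(n:ℝ)-2) ≠ 0 := by nlinarith
  have hne3 : (2*(n:ℝ)-3) ≠ 0 := by nlinarith
  have hne0 : (2*(n:ℝ)) ≠ 0 := by nlinarith
  have hK2ne : (2*(n:ℝ)*(2*(n:ℝ)-1)) ≠ 0 := mul_ne_zero hne0 hne1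
  have hK4ne : (2*(n:ℝ)*(2*(n:ℝ)-1)*(2*(n:ℝ)-2)*(2*(n:ℝ)-3)) ≠ 0 :=
    mul_ne_zero (mul_ne_zero hK2ne hne2) hne3
  have hS1v : (∑ σ : Equiv.Perm (Fin (2*n)), R1 σ)
      = (2*((2*(n:ℝ)) - 1)) * ((Fintype.card (Equiv.Perm (Fin (2*n))) : ℝ)
        * ((n:ℝ)^2 - (n:ℝ))) / 2 / (2*(n:ℝ)*(2*(n:ℝ)-1)) := by
    rw [eq_div_iff hK2ne]; linear_combination hSR1
  have hS2v : (∑ σ : Equiv.Perm (Fin (2*n)), R2 σ)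
      = (2*((2*(n:ℝ)) - 1)) * ((Fintype.card (Equiv.Perm (Fin (2*n))) : ℝ)
        * ((n:ℝ)^2 - (n:ℝ))) / 2 / (2*(n:ℝ)*(2*(n:ℝ)-1)) := by
    rw [eq_div_iff hK2ne]; linear_combination hSR2
  have hSPv : (∑ σ : Equiv.Perm (Fin (2*n)), R1 σ * R2 σ)
      = ((2*((2*(n:ℝ)) - 1))^2 - 4*(2*C3 + 2*((2*(n:ℝ)) - 1)) + 2*(2*((2*(n:ℝ)) - 1))) *
        ((Fintype.card (Equiv.Perm (Fin (2*n))) : ℝ) *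
          (((n:ℝ)^2 - (n:ℝ)) * ((n:ℝ)^2 - (n:ℝ)))) / 4 /
        (2*(n:ℝ)*(2*(n:ℝ)-1)*(2*(n:ℝ)-2)*(2*(n:ℝ)-3)) := by
    rw [eq_div_iff hK4ne]; linear_combination hSP
  rw [hS1v, hS2v, hSPv, hN']
  have hNe1 : (2*(n:ℝ)) - 1 ≠ 0 := hne1
  have hNe3 : (2*(n:ℝ)) - 3 ≠ 0 := hne3
  field_simp
  ring
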